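/- Let X be an infinite chain with X = X^- (i.e., every principal down-set has cardinality strictly less than |X|). If α is a composition of finitely many order-preserving self-maps of X each with image of cardinality |X|, then Im(α) has no maximum element. -/

import Mathlib

theorem stmt_11 {X : Type*} [LinearOrder X] [Infinite X]
    (hXm : ∀ x : X, Cardinal.mk ↥(Set.Iic x) < Cardinal.mk X)
    (l : List (X → X)) (hl : l ≠ [])
    (hJ : ∀ f ∈ l, Monotone f ∧ Cardinal.mk ↥(Set.range f) = Cardinal.mk X)
    (α : X → X) (hα : α = l.foldr (· ∘ ·) id) :
    ¬ ∃ m : X, IsGreatest (Set.range α) m := by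
  subst hα
  have hnomax : ∀ x : X, ∃ y, x < y := by
    intro x
    by_contra h
    push_neg at h
    have hu : Set.Iic x = Set.univ := Set.eq_univ_of_forall h
    have := hXm x
    rw [hu, Cardinal.mk_univ] at this
    exact lt_irrefl _ this
  have key : ∀ (L : List (X → X)),
      (∀ f ∈ L, Monotone f ∧ Cardinal.mk ↥(Set.range f) = Cardinal.mk X) →
      ∀ m : X, ∃ x, m < L.foldr (· ∘ ·) id x := by
    intro L
    induction L with
    | nil => intro _ m; simpa using hnomax m
    | cons f t ih =>
      intro hLt m
      have hf := hLt f List.mem_cons_self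
      have ht : ∀ g ∈ t, Monotone g ∧ Cardinal.mk ↥(Set.range g) = Cardinal.mk X :=
        fun g hg => hLt g (List.mem_cons_of_mem f hg)
      have hfu : ∃ z, m < f z := by
        by_contra h
        push_neg at h
        have hsub : Set.range f ⊆ Set.Iic m := by
          rintro _ ⟨z, rfl⟩; exact h z
        have hle := Cardinal.mk_le_mk_of_subset hsub
        rw [hf.2] at hle
        exact lt_irrefl _ (lt_of_le_of_lt hle (hXm m))
      obtain ⟨z, hz⟩ := hfu
      obtain ⟨x, hx⟩ := ih ht z
      exact ⟨x, lt_of_lt_of_le hz (hf.1 hx.le)⟩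
  rintro ⟨m, hm⟩
  obtain ⟨x, hx⟩ := key l hJ m
  exact absurd (hm.2 ⟨x, rfl⟩) (not_le_of_gt hx)
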